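/- Let ε > 0 and h(x) = 1/(√x + ε) on [0,∞). Let A, B, C be independent real random variables with A > 0 almost surely, E[|h'(A)|] < ∞, E[B] = E[C] = 0, and suppose all expectations below are finite. Then |E[h(A + (B+C)²) C] − E[h'(A)] E[C³]| ≤ E[h''(A)] (2 E[|B|³] E[C²] + 5 E[B²] E[|C|³] + E[|C|⁵]). -/

import Mathlib

open MeasureTheory ProbabilityTheory

/-- `h(x) = 1/(√x + ε)`. -/
noncomputable def hAdam (ε x : ℝ) : ℝ := 1 / (Real.sqrt x + ε)

/-- `h'(x) = −1/(2√x (√x+ε)²)`. -/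
noncomputable def hAdam' (ε x : ℝ) : ℝ := -(1 / (2 * Real.sqrt x * (Real.sqrt x + ε) ^ 2))

/-- `h''(x) = 1/(2x(√x+ε)³) + 1/(4 x^{3/2} (√x+ε)²)`. -/
noncomputable def hAdam'' (ε x : ℝ) : ℝ :=
  1 / (2 * x * (Real.sqrt x + ε) ^ 3) + 1 / (4 * x * Real.sqrt x * (Real.sqrt x + ε) ^ 2)

lemma hAdam_deriv {ε : ℝ} (hε : 0 < ε) {x : ℝ} (hx : 0 < x) :
    HasDerivAt (hAdam ε) (hAdam' ε x) x := by
  have hsx : 0 < Real.sqrt x := Real.sqrt_pos.2 hx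
  have hne : Real.sqrt x + ε ≠ 0 := by positivity
  have h1 : HasDerivAt (fun y => Real.sqrt y + ε) (1 / (2 * Real.sqrt x)) x :=
    (Real.hasDerivAt_sqrt hx.ne').add_const ε
  have he : hAdam ε = fun y => (Real.sqrt y + ε)⁻¹ := by
    funext y; simp [hAdam, one_div]
  have hval : hAdam' ε x = -(1 / (2 * Real.sqrt x)) / (Real.sqrt x + ε) ^ 2 := by
    unfold hAdam'; field_simp
  rw [he, hval]
  exact h1.inv hne

lemma hAdam'_deriv {ε : ℝ} (hε : 0 < ε) {x : ℝ} (hx : 0 < x) :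
    HasDerivAt (hAdam' ε) (hAdam'' ε x) x := by
  have hsx : 0 < Real.sqrt x := Real.sqrt_pos.2 hx
  have hse : 0 < Real.sqrt x + ε := by positivity
  have hs := Real.hasDerivAt_sqrt hx.ne'
  have h1 : HasDerivAt (fun y => 2 * Real.sqrt y) (2 * (1 / (2 * Real.sqrt x))) x :=
    hs.const_mul 2
  have h2 : HasDerivAt (fun y => (Real.sqrt y + ε) ^ 2)
      (2 * (Real.sqrt x + ε) ^ 1 * (1 / (2 * Real.sqrt x))) x := (hs.add_const ε).pow 2
  have h3 := h1.mul h2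
  have hne : 2 * Real.sqrt x * (Real.sqrt x + ε) ^ 2 ≠ 0 := by positivity
  have h4 := (h3.inv hne).neg
  have he : hAdam' ε = fun y => -(2 * Real.sqrt y * (Real.sqrt y + ε) ^ 2)⁻¹ := by
    funext y; simp [hAdam', one_div]
  have hval : hAdam'' ε x =
      -(-(2 * (1 / (2 * Real.sqrt x)) * (Real.sqrt x + ε) ^ 2 +
          2 * Real.sqrt x * (2 * (Real.sqrt x + ε) ^ 1 * (1 / (2 * Real.sqrt x)))) /
        (2 * Real.sqrt x * (Real.sqrt x + ε) ^ 2) ^ 2) := by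
    unfold hAdam''
    have hx2 : Real.sqrt x ^ 2 = x := Real.sq_sqrt hx.le
    set s := Real.sqrt x with hsdef
    rw [← hx2]
    field_simp
    ring
  rw [he, hval]
  exact h4

lemma hAdam''_nonneg {ε : ℝ} (hε : 0 < ε) {x : ℝ} (hx : 0 < x) : 0 ≤ hAdam'' ε x := by
  have hsx : 0 < Real.sqrt x := Real.sqrt_pos.2 hx
  have : 0 < Real.sqrt x + ε := by positivity
  unfold hAdam''; positivity

lemma hAdam''_anti {ε : ℝ} (hε : 0 < ε) {x y : ℝ} (hx : 0 < x) (hxy : x ≤ y) :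
    hAdam'' ε y ≤ hAdam'' ε x := by
  have hy : 0 < y := hx.trans_le hxy
  have hsx : 0 < Real.sqrt x := Real.sqrt_pos.2 hx
  have hsxy : Real.sqrt x ≤ Real.sqrt y := Real.sqrt_le_sqrt hxy
  unfold hAdam''
  have h1 : 0 < Real.sqrt x + ε := by positivity
  gcongr <;> positivity

/-- `0 ≤ h'(v) − h'(u) ≤ h''(u) (v−u)` for `0 < u ≤ v`. -/
lemma hAdam'_incr {ε : ℝ} (hε : 0 < ε) {u v : ℝ} (hu : 0 < u) (huv : u ≤ v) :
    0 ≤ hAdam' ε v - hAdam' ε u ∧ hAdam' ε v - hAdam' ε u ≤ hAdam'' ε u * (v - u) := by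
  rcases eq_or_lt_of_le huv with rfl | hlt
  · simp
  have hcont : ContinuousOn (hAdam' ε) (Set.Icc u v) := fun x hx =>
    ((hAdam'_deriv hε (hu.trans_le hx.1)).continuousAt).continuousWithinAt
  have hderiv : ∀ x ∈ Set.Ioo u v, HasDerivAt (hAdam' ε) (hAdam'' ε x) x := fun x hx =>
    hAdam'_deriv hε (hu.trans hx.1)
  obtain ⟨c, hc, hceq⟩ := exists_hasDerivAt_eq_slope (hAdam' ε) (hAdam'' ε) hlt hcont hderiv
  have hslope : hAdam' ε v - hAdam' ε u = hAdam'' ε c * (v - u) := by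
    rw [hceq, div_mul_cancel₀ _ (sub_ne_zero.mpr hlt.ne')]
  have hc0 : 0 < c := hu.trans hc.1
  have h1 : 0 ≤ hAdam'' ε c := hAdam''_nonneg hε hc0
  have h2 : hAdam'' ε c ≤ hAdam'' ε u := hAdam''_anti hε hu hc.1.le
  constructor
  · rw [hslope]; exact mul_nonneg h1 (by linarith)
  · rw [hslope]; exact mul_le_mul_of_nonneg_right h2 (by linarith)

/-- One-sided Taylor bound for `t ≤ s`. -/
lemma hAdam_taylor_aux {ε : ℝ} (hε : 0 < ε) {a s t : ℝ} (ha : 0 < a) (ht : 0 ≤ t)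
    (hts : t ≤ s) :
    0 ≤ hAdam ε (a + s) - hAdam ε (a + t) - hAdam' ε a * (s - t) ∧
    hAdam ε (a + s) - hAdam ε (a + t) - hAdam' ε a * (s - t)
      ≤ hAdam'' ε a * (s ^ 2 - t ^ 2) / 2 := by
  rcases eq_or_lt_of_le hts with rfl | hlt
  · simp [hAdam''_nonneg hε ha]
  -- F(u) = h(a+u) − h'(a) u ; G(u) = h''(a) u²/2 − F(u)
  set F : ℝ → ℝ := fun u => hAdam ε (a + u) - hAdam' ε a * u with hF
  have hFderiv : ∀ u, 0 ≤ u → HasDerivAt F (hAdam' ε (a + u) - hAdam' ε a) u := by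
    intro u hu0
    have h1 : HasDerivAt (fun u => hAdam ε (a + u)) (hAdam' ε (a + u)) u := by
      have := (hAdam_deriv hε (show 0 < a + u by linarith)).comp u
        ((hasDerivAt_id u).const_add a)
      rw [mul_one] at this
      exact this
    have h2 := h1.sub ((hasDerivAt_id u).const_mul (hAdam' ε a))
    rw [mul_one] at h2
    exact h2
  have hcontF : ContinuousOn F (Set.Icc t s) := fun x hx =>
    ((hFderiv x (ht.trans hx.1)).continuousAt).continuousWithinAt
  obtain ⟨c, hc, hceq⟩ := exists_hasDerivAt_eq_slope F
    (fun u => hAdam' ε (a + u) - hAdam' ε a) hlt hcontF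
    (fun x hx => hFderiv x (ht.trans hx.1.le))
  have hcpos : 0 ≤ c := ht.trans hc.1.le
  have hFs : F s - F t = (hAdam' ε (a + c) - hAdam' ε a) * (s - t) := by
    rw [hceq, div_mul_cancel₀ _ (sub_ne_zero.mpr hlt.ne')]
  have hkey := hAdam'_incr hε ha (show a ≤ a + c by linarith)
  -- lower bound: F s − F t ≥ 0
  have hlow : 0 ≤ F s - F t := by
    rw [hFs]
    exact mul_nonneg (by simpa using hkey.1) (by linarith)
  -- upper bound via G
  set G : ℝ → ℝ := fun u => hAdam'' ε a * u ^ 2 / 2 - F u with hG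
  have hGderiv : ∀ u, 0 ≤ u →
      HasDerivAt G (hAdam'' ε a * u - (hAdam' ε (a + u) - hAdam' ε a)) u := by
    intro u hu0
    have h1 : HasDerivAt (fun u : ℝ => hAdam'' ε a * u ^ 2 / 2) (hAdam'' ε a * u) u := by
      have := ((hasDerivAt_pow 2 u).const_mul (hAdam'' ε a)).div_const 2
      rw [show hAdam'' ε a * ((2:ℕ) * u ^ (2 - 1)) / 2 = hAdam'' ε a * u by push_cast; ring] at this
      exact this
    exact h1.sub (hFderiv u hu0)
  have hcontG : ContinuousOn G (Set.Icc t s) := fun x hx =>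
    ((hGderiv x (ht.trans hx.1)).continuousAt).continuousWithinAt
  obtain ⟨d, hd, hdeq⟩ := exists_hasDerivAt_eq_slope G
    (fun u => hAdam'' ε a * u - (hAdam' ε (a + u) - hAdam' ε a)) hlt hcontG
    (fun x hx => hGderiv x (ht.trans hx.1.le))
  have hdpos : 0 ≤ d := ht.trans hd.1.le
  have hGs : G s - G t = (hAdam'' ε a * d - (hAdam' ε (a + d) - hAdam' ε a)) * (s - t) := by
    rw [hdeq, div_mul_cancel₀ _ (sub_ne_zero.mpr hlt.ne')]
  have hkey2 := hAdam'_incr hε ha (show a ≤ a + d by linarith)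
  have hd2 : hAdam' ε (a + d) - hAdam' ε a ≤ hAdam'' ε a * d := by
    have := hkey2.2; simpa using this
  have hhigh : 0 ≤ G s - G t := by
    rw [hGs]
    exact mul_nonneg (by linarith) (by linarith)
  -- conclude
  have hFst : F s - F t = hAdam ε (a + s) - hAdam ε (a + t) - hAdam' ε a * (s - t) := by
    simp only [hF]; ring
  constructor
  · rw [← hFst]; exact hlow
  · rw [← hFst]
    have := hhigh
    simp only [hG] at this
    nlinarith [this]

/-- Key Taylor bound: `|h(a+s) − h(a+t) − h'(a)(s−t)| ≤ h''(a) |s²−t²| / 2`. -/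
lemma hAdam_taylor {ε : ℝ} (hε : 0 < ε) {a s t : ℝ} (ha : 0 < a) (hs : 0 ≤ s) (ht : 0 ≤ t) :
    |hAdam ε (a + s) - hAdam ε (a + t) - hAdam' ε a * (s - t)|
      ≤ hAdam'' ε a * |s ^ 2 - t ^ 2| / 2 := by
  rcases le_total t s with hts | hst
  · obtain ⟨h1, h2⟩ := hAdam_taylor_aux hε ha ht hts
    rw [abs_of_nonneg h1, abs_of_nonneg (by nlinarith : (0:ℝ) ≤ s ^ 2 - t ^ 2)]
    exact h2
  · obtain ⟨h1, h2⟩ := hAdam_taylor_aux hε ha hs hst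
    rw [show hAdam ε (a + s) - hAdam ε (a + t) - hAdam' ε a * (s - t)
        = -(hAdam ε (a + t) - hAdam ε (a + s) - hAdam' ε a * (t - s)) by ring,
      abs_neg, abs_of_nonneg h1, abs_sub_comm (s ^ 2),
      abs_of_nonneg (by nlinarith : (0:ℝ) ≤ t ^ 2 - s ^ 2)]
    exact h2

lemma hAdam_bound {ε : ℝ} (hε : 0 < ε) (x : ℝ) : |hAdam ε x| ≤ ε⁻¹ := by
  have hs : 0 ≤ Real.sqrt x := Real.sqrt_nonneg x
  have h0 : 0 < Real.sqrt x + ε := by positivity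
  rw [abs_of_nonneg (by unfold hAdam; positivity)]
  unfold hAdam
  rw [one_div]
  exact inv_anti₀ hε (by linarith)

lemma poly_bound (b c : ℝ) :
    |((b + c) ^ 2) ^ 2 - (b ^ 2) ^ 2| * |c| / 2
      ≤ 2 * |b| ^ 3 * c ^ 2 + 3 * b ^ 2 * |c| ^ 3 + 2 * |b| * |c| ^ 4 + |c| ^ 5 / 2 := by
  have e : ((b + c) ^ 2) ^ 2 - (b ^ 2) ^ 2
      = (4 * b ^ 3 + 6 * b ^ 2 * c + 4 * b * c ^ 2 + c ^ 3) * c := by ring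
  have h1 : |((b + c) ^ 2) ^ 2 - (b ^ 2) ^ 2|
      ≤ (4 * |b| ^ 3 + 6 * b ^ 2 * |c| + 4 * |b| * c ^ 2 + |c| ^ 3) * |c| := by
    rw [e, abs_mul]
    refine mul_le_mul_of_nonneg_right ?_ (abs_nonneg c)
    have t1 : |4 * b ^ 3 + 6 * b ^ 2 * c + 4 * b * c ^ 2 + c ^ 3|
        ≤ |4 * b ^ 3| + |6 * b ^ 2 * c| + |4 * b * c ^ 2| + |c ^ 3| := by
      calc |4 * b ^ 3 + 6 * b ^ 2 * c + 4 * b * c ^ 2 + c ^ 3|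
          ≤ |4 * b ^ 3 + 6 * b ^ 2 * c + 4 * b * c ^ 2| + |c ^ 3| := abs_add_le _ _
        _ ≤ |4 * b ^ 3 + 6 * b ^ 2 * c| + |4 * b * c ^ 2| + |c ^ 3| := by
            have := abs_add_le (4 * b ^ 3 + 6 * b ^ 2 * c) (4 * b * c ^ 2); linarith
        _ ≤ |4 * b ^ 3| + |6 * b ^ 2 * c| + |4 * b * c ^ 2| + |c ^ 3| := by
            have := abs_add_le (4 * b ^ 3) (6 * b ^ 2 * c); linarith
    have e1 : |4 * b ^ 3| = 4 * |b| ^ 3 := by rw [abs_mul, abs_pow]; simp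
    have e2 : |6 * b ^ 2 * c| = 6 * b ^ 2 * |c| := by
      rw [abs_mul, abs_mul, abs_pow, sq_abs]; simp
    have e3 : |4 * b * c ^ 2| = 4 * |b| * c ^ 2 := by
      rw [abs_mul, abs_mul, abs_pow, sq_abs]; simp
    have e4 : |c ^ 3| = |c| ^ 3 := abs_pow c 3
    linarith [t1, e1.le, e2.le, e3.le, e4.le, e1.ge, e2.ge, e3.ge, e4.ge]
  have h2 := mul_le_mul_of_nonneg_right h1 (abs_nonneg c)
  have h3 : (4 * |b| ^ 3 + 6 * b ^ 2 * |c| + 4 * |b| * c ^ 2 + |c| ^ 3) * |c| * |c|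
      = (2 * |b| ^ 3 * c ^ 2 + 3 * b ^ 2 * |c| ^ 3 + 2 * |b| * |c| ^ 4 + |c| ^ 5 / 2) * 2 := by
    linear_combination (4 * |b| ^ 3 - 4 * |b| * |c| ^ 2) * sq_abs c
  linarith

lemma hAdam_meas {ε : ℝ} (hε : 0 < ε) : Continuous (hAdam ε) := by
  unfold hAdam
  exact continuous_const.div (Real.continuous_sqrt.add continuous_const)
    (fun x => by positivity)

lemma hAdam'_meas (ε : ℝ) : Measurable (hAdam' ε) := by
  unfold hAdam'
  have hs : Measurable Real.sqrt := Real.continuous_sqrt.measurable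
  exact (measurable_const.div ((hs.const_mul 2).mul ((hs.add_const ε).pow_const 2))).neg

lemma hAdam''_meas (ε : ℝ) : Measurable (hAdam'' ε) := by
  unfold hAdam''
  have hs : Measurable Real.sqrt := Real.continuous_sqrt.measurable
  exact (measurable_const.div ((measurable_id.const_mul 2).mul ((hs.add_const ε).pow_const 3))).add
    (measurable_const.div (((measurable_id.const_mul 4).mul hs).mul ((hs.add_const ε).pow_const 2)))

set_option maxHeartbeats 1000000 in
/-- for independent real random variables `A, B, C` with `A > 0` a.s.,
`E[|h'(A)|] < ∞`, `E[B] = E[C] = 0` and all expectations below finite,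
`|E[h(A+(B+C)²) C] − E[h'(A)] E[C³]| ≤ E[h''(A)] (2E[|B|³]E[C²] + 5E[B²]E[|C|³] + E[|C|⁵])`. -/
theorem stmt7_taylor_lemma
    {Ω : Type*} [MeasurableSpace Ω] (μ : Measure Ω) [IsProbabilityMeasure μ]
    (ε : ℝ) (hε : 0 < ε)
    (A B C : Ω → ℝ) (hmA : Measurable A) (hmB : Measurable B) (hmC : Measurable C)
    (hindep : iIndepFun ![A, B, C] μ)
    (hApos : ∀ᵐ ω ∂μ, 0 < A ω)
    (hInt1 : Integrable (fun ω => |hAdam' ε (A ω)|) μ)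
    (hEB : ∫ ω, B ω ∂μ = 0) (hEC : ∫ ω, C ω ∂μ = 0)
    (hI0 : Integrable (fun ω => hAdam ε (A ω + (B ω + C ω) ^ 2) * C ω) μ)
    (hI1 : Integrable (fun ω => hAdam' ε (A ω)) μ)
    (hI2 : Integrable (fun ω => hAdam'' ε (A ω)) μ)
    (hI3 : Integrable (fun ω => |B ω| ^ 3) μ)
    (hI4 : Integrable (fun ω => (C ω) ^ 2) μ)
    (hI5 : Integrable (fun ω => (B ω) ^ 2) μ)
    (hI6 : Integrable (fun ω => |C ω| ^ 3) μ)
    (hI7 : Integrable (fun ω => |C ω| ^ 5) μ)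
    (hI8 : Integrable (fun ω => (C ω) ^ 3) μ) :
    |(∫ ω, hAdam ε (A ω + (B ω + C ω) ^ 2) * C ω ∂μ)
        - (∫ ω, hAdam' ε (A ω) ∂μ) * ∫ ω, (C ω) ^ 3 ∂μ|
      ≤ (∫ ω, hAdam'' ε (A ω) ∂μ)
          * (2 * (∫ ω, |B ω| ^ 3 ∂μ) * (∫ ω, (C ω) ^ 2 ∂μ)
            + 5 * (∫ ω, (B ω) ^ 2 ∂μ) * (∫ ω, |C ω| ^ 3 ∂μ)
            + ∫ ω, |C ω| ^ 5 ∂μ) := by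

  -- measurability helpers
  have mh : ∀ i, Measurable (![A, B, C] i) := by
    intro i; fin_cases i <;> assumption
  have mhA : Continuous (hAdam ε) := hAdam_meas hε
  have mh' : Measurable (hAdam' ε) := hAdam'_meas ε
  have mh'' : Measurable (hAdam'' ε) := hAdam''_meas ε
  -- independence facts
  have hAB_C : IndepFun (fun ω => (A ω, B ω)) C μ := by
    have := hindep.indepFun_prodMk mh 0 1 2 (by decide) (by decide)
    simpa using this
  have hA_BC : IndepFun A (fun ω => (B ω, C ω)) μ := by
    have := (hindep.indepFun_prodMk mh 1 2 0 (by decide) (by decide)).symm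
    simpa using this
  have hB_C : IndepFun B C μ := by
    have := hindep.indepFun (show (1 : Fin 3) ≠ 2 by decide)
    simpa using this
  -- basic integrability
  have intC : Integrable C μ := by
    refine (hI4.add (integrable_const 1)).mono' hmC.aestronglyMeasurable ?_
    filter_upwards with ω
    simp only [Pi.add_apply, Real.norm_eq_abs]
    nlinarith [sq_nonneg (|C ω| - 1), sq_abs (C ω), abs_nonneg (C ω)]
  have intB : Integrable B μ := by
    refine (hI5.add (integrable_const 1)).mono' hmB.aestronglyMeasurable ?_
    filter_upwards with ω
    simp only [Pi.add_apply, Real.norm_eq_abs]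
    nlinarith [sq_nonneg (|B ω| - 1), sq_abs (B ω), abs_nonneg (B ω)]
  have intC4 : Integrable (fun ω => |C ω| ^ 4) μ := by
    refine (hI6.add hI7).mono' (hmC.abs.pow_const 4).aestronglyMeasurable ?_
    filter_upwards with ω
    simp only [Pi.add_apply, Real.norm_eq_abs]
    rw [abs_of_nonneg (by positivity : (0:ℝ) ≤ |C ω| ^ 4)]
    nlinarith [mul_nonneg (pow_nonneg (abs_nonneg (C ω)) 3) (sq_nonneg (|C ω| - 1)), pow_nonneg (abs_nonneg (C ω)) 4]
  -- the three pieces of the decomposition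
  set D : Ω → ℝ := fun ω =>
    hAdam ε (A ω + (B ω + C ω) ^ 2) - hAdam ε (A ω + B ω ^ 2)
      - hAdam' ε (A ω) * ((B ω + C ω) ^ 2 - B ω ^ 2) with hD
  -- integrability of h(A+B²)·C
  have intf1 : Integrable (fun ω => hAdam ε (A ω + B ω ^ 2) * C ω) μ := by
    refine (intC.abs.const_mul ε⁻¹).mono'
      ((mhA.measurable.comp (hmA.add (hmB.pow_const 2))).mul hmC).aestronglyMeasurable ?_
    filter_upwards with ω
    rw [Real.norm_eq_abs, abs_mul]
    exact mul_le_mul_of_nonneg_right (hAdam_bound hε _) (abs_nonneg _)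
  -- integrability of the first-order term
  have hψmeas : Measurable (fun p : ℝ × ℝ => 2 * p.1 * p.2 ^ 2 + p.2 ^ 3) := by
    measurability
  have hBC2 : IndepFun B (fun ω => C ω ^ 2) μ :=
    hB_C.comp measurable_id (measurable_id.pow_const 2)
  have intBC2 : Integrable (fun ω => B ω * C ω ^ 2) μ := hBC2.integrable_mul intB hI4
  have intg2 : Integrable (fun ω => 2 * B ω * C ω ^ 2 + C ω ^ 3) μ := by
    have : (fun ω => 2 * B ω * C ω ^ 2 + C ω ^ 3)
        = fun ω => 2 * (B ω * C ω ^ 2) + C ω ^ 3 := by funext ω; ring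
    rw [this]
    exact (intBC2.const_mul 2).add hI8
  have hindf2 : IndepFun (fun ω => hAdam' ε (A ω))
      (fun ω => 2 * B ω * C ω ^ 2 + C ω ^ 3) μ := hA_BC.comp mh' hψmeas
  have intf2 : Integrable (fun ω => hAdam' ε (A ω) * (2 * B ω * C ω ^ 2 + C ω ^ 3)) μ :=
    hindf2.integrable_mul hI1 intg2
  -- integrability of D·C
  have intDC : Integrable (fun ω => D ω * C ω) μ := by
    have : (fun ω => D ω * C ω) = fun ω =>
        hAdam ε (A ω + (B ω + C ω) ^ 2) * C ω - hAdam ε (A ω + B ω ^ 2) * C ω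
          - hAdam' ε (A ω) * (2 * B ω * C ω ^ 2 + C ω ^ 3) := by
      funext ω; simp only [hD]; ring
    rw [this]
    exact (hI0.sub intf1).sub intf2
  -- split the integral
  have hsplit : ∫ ω, hAdam ε (A ω + (B ω + C ω) ^ 2) * C ω ∂μ
      = (∫ ω, D ω * C ω ∂μ) + (∫ ω, hAdam ε (A ω + B ω ^ 2) * C ω ∂μ)
        + ∫ ω, hAdam' ε (A ω) * (2 * B ω * C ω ^ 2 + C ω ^ 3) ∂μ := by
    have e : (fun ω => hAdam ε (A ω + (B ω + C ω) ^ 2) * C ω) = fun ω =>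
        D ω * C ω + hAdam ε (A ω + B ω ^ 2) * C ω
          + hAdam' ε (A ω) * (2 * B ω * C ω ^ 2 + C ω ^ 3) := by
      funext ω; simp only [hD]; ring
    have iadd : Integrable (fun ω => D ω * C ω + hAdam ε (A ω + B ω ^ 2) * C ω) μ :=
      intDC.add intf1
    rw [e, integral_add iadd intf2, integral_add intDC intf1]
  -- the middle integral vanishes
  have key1 : ∫ ω, hAdam ε (A ω + B ω ^ 2) * C ω ∂μ = 0 := by
    have hφ : Measurable (fun p : ℝ × ℝ => hAdam ε (p.1 + p.2 ^ 2)) :=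
      mhA.measurable.comp (measurable_fst.add (measurable_snd.pow_const 2))
    have hind : IndepFun (fun ω => hAdam ε (A ω + B ω ^ 2)) C μ :=
      hAB_C.comp hφ measurable_id
    have := hind.integral_fun_mul_eq_mul_integral
      (hφ.comp (hmA.prodMk hmB)).aestronglyMeasurable hmC.aestronglyMeasurable
    calc ∫ ω, hAdam ε (A ω + B ω ^ 2) * C ω ∂μ
        = (∫ ω, hAdam ε (A ω + B ω ^ 2) ∂μ) * ∫ ω, C ω ∂μ := this
      _ = 0 := by rw [hEC, mul_zero]
  -- the first-order integral
  have key2 : ∫ ω, hAdam' ε (A ω) * (2 * B ω * C ω ^ 2 + C ω ^ 3) ∂μ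
      = (∫ ω, hAdam' ε (A ω) ∂μ) * ∫ ω, (C ω) ^ 3 ∂μ := by
    have h := hindf2.integral_fun_mul_eq_mul_integral (mh'.comp hmA).aestronglyMeasurable
      (hψmeas.comp (hmB.prodMk hmC)).aestronglyMeasurable
    have e1 : ∫ ω, B ω * C ω ^ 2 ∂μ = (∫ ω, B ω ∂μ) * ∫ ω, C ω ^ 2 ∂μ :=
      hBC2.integral_fun_mul_eq_mul_integral hmB.aestronglyMeasurable
        (hmC.pow_const 2).aestronglyMeasurable
    have e2 : ∫ ω, (2 * B ω * C ω ^ 2 + C ω ^ 3) ∂μ = ∫ ω, C ω ^ 3 ∂μ := by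
      have e : (fun ω => 2 * B ω * C ω ^ 2 + C ω ^ 3)
          = fun ω => 2 * (B ω * C ω ^ 2) + C ω ^ 3 := by funext ω; ring
      rw [e, integral_add (intBC2.const_mul 2) hI8, integral_const_mul, e1, hEB]
      ring
    calc ∫ ω, hAdam' ε (A ω) * (2 * B ω * C ω ^ 2 + C ω ^ 3) ∂μ
        = (∫ ω, hAdam' ε (A ω) ∂μ) * ∫ ω, (2 * B ω * C ω ^ 2 + C ω ^ 3) ∂μ := h
      _ = (∫ ω, hAdam' ε (A ω) ∂μ) * ∫ ω, (C ω) ^ 3 ∂μ := by rw [e2]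
  -- reduce the goal to bounding |∫ D·C|
  rw [hsplit, key1, key2]
  have hred : |(∫ ω, D ω * C ω ∂μ) + 0
      + (∫ ω, hAdam' ε (A ω) ∂μ) * (∫ ω, (C ω) ^ 3 ∂μ)
      - (∫ ω, hAdam' ε (A ω) ∂μ) * (∫ ω, (C ω) ^ 3 ∂μ)| = |∫ ω, D ω * C ω ∂μ| := by
    rw [add_zero, add_sub_cancel_right]
  rw [hred]
  -- the dominating function
  set g : Ω → ℝ := fun ω =>
    2 * |B ω| ^ 3 * C ω ^ 2 + 3 * B ω ^ 2 * |C ω| ^ 3 + 2 * |B ω| * |C ω| ^ 4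
      + |C ω| ^ 5 / 2 with hg
  have habs : ∀ᵐ ω ∂μ, ‖D ω * C ω‖ ≤ hAdam'' ε (A ω) * g ω := by
    filter_upwards [hApos] with ω hω
    rw [Real.norm_eq_abs, abs_mul]
    have ht := hAdam_taylor hε hω (sq_nonneg (B ω + C ω)) (sq_nonneg (B ω))
    calc |D ω| * |C ω|
        ≤ hAdam'' ε (A ω) * |((B ω + C ω) ^ 2) ^ 2 - (B ω ^ 2) ^ 2| / 2 * |C ω| :=
          mul_le_mul_of_nonneg_right ht (abs_nonneg _)
      _ = hAdam'' ε (A ω) * (|((B ω + C ω) ^ 2) ^ 2 - (B ω ^ 2) ^ 2| * |C ω| / 2) := by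
          ring
      _ ≤ hAdam'' ε (A ω) * g ω :=
          mul_le_mul_of_nonneg_left (poly_bound (B ω) (C ω)) (hAdam''_nonneg hε hω)
  -- integrability of the dominating function
  have i1ind : IndepFun (fun ω => |B ω| ^ 3) (fun ω => C ω ^ 2) μ :=
    hB_C.comp (measurable_abs.pow_const 3) (measurable_id.pow_const 2)
  have i2ind : IndepFun (fun ω => B ω ^ 2) (fun ω => |C ω| ^ 3) μ :=
    hB_C.comp (measurable_id.pow_const 2) (measurable_abs.pow_const 3)
  have i3ind : IndepFun (fun ω => |B ω|) (fun ω => |C ω| ^ 4) μ :=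
    hB_C.comp measurable_abs (measurable_abs.pow_const 4)
  have i1 : Integrable (fun ω => |B ω| ^ 3 * C ω ^ 2) μ := i1ind.integrable_mul hI3 hI4
  have i2 : Integrable (fun ω => B ω ^ 2 * |C ω| ^ 3) μ := i2ind.integrable_mul hI5 hI6
  have i3 : Integrable (fun ω => |B ω| * |C ω| ^ 4) μ := i3ind.integrable_mul intB.abs intC4
  have intg : Integrable g μ := by
    have e : g = fun ω => 2 * (|B ω| ^ 3 * C ω ^ 2) + (3 * (B ω ^ 2 * |C ω| ^ 3)
        + (2 * (|B ω| * |C ω| ^ 4) + |C ω| ^ 5 / 2)) := by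
      funext ω; simp only [hg]; ring
    rw [e]
    exact (i1.const_mul 2).add ((i2.const_mul 3).add ((i3.const_mul 2).add (hI7.div_const 2)))
  have hgψ : Measurable (fun p : ℝ × ℝ =>
      2 * |p.1| ^ 3 * p.2 ^ 2 + 3 * p.1 ^ 2 * |p.2| ^ 3 + 2 * |p.1| * |p.2| ^ 4
        + |p.2| ^ 5 / 2) := by
    have h1 : Measurable (fun p : ℝ × ℝ => |p.1|) := measurable_fst.abs
    have h2 : Measurable (fun p : ℝ × ℝ => |p.2|) := measurable_snd.abs
    exact (((((h1.pow_const 3).const_mul 2).mul (measurable_snd.pow_const 2)).add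
      (((measurable_fst.pow_const 2).const_mul 3).mul (h2.pow_const 3))).add
      ((h1.const_mul 2).mul (h2.pow_const 4))).add ((h2.pow_const 5).div_const 2)
  have hindK : IndepFun (fun ω => hAdam'' ε (A ω)) g μ := hA_BC.comp mh'' hgψ
  have intK : Integrable (fun ω => hAdam'' ε (A ω) * g ω) μ := hindK.integrable_mul hI2 intg
  -- main bound
  have hbound : |∫ ω, D ω * C ω ∂μ| ≤ ∫ ω, hAdam'' ε (A ω) * g ω ∂μ := by
    calc |∫ ω, D ω * C ω ∂μ| ≤ ∫ ω, ‖D ω * C ω‖ ∂μ := by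
          rw [← Real.norm_eq_abs]; exact norm_integral_le_integral_norm _
      _ ≤ ∫ ω, hAdam'' ε (A ω) * g ω ∂μ := integral_mono_ae intDC.norm intK habs
  -- factor the integral of the dominating function
  have eK : ∫ ω, hAdam'' ε (A ω) * g ω ∂μ = (∫ ω, hAdam'' ε (A ω) ∂μ) * ∫ ω, g ω ∂μ :=
    hindK.integral_fun_mul_eq_mul_integral (mh''.comp hmA).aestronglyMeasurable
      (hgψ.comp (hmB.prodMk hmC)).aestronglyMeasurable
  -- compute ∫ g
  have eg1 : ∫ ω, |B ω| ^ 3 * C ω ^ 2 ∂μ = (∫ ω, |B ω| ^ 3 ∂μ) * ∫ ω, C ω ^ 2 ∂μ :=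
    i1ind.integral_fun_mul_eq_mul_integral (hmB.abs.pow_const 3).aestronglyMeasurable
      (hmC.pow_const 2).aestronglyMeasurable
  have eg2 : ∫ ω, B ω ^ 2 * |C ω| ^ 3 ∂μ = (∫ ω, B ω ^ 2 ∂μ) * ∫ ω, |C ω| ^ 3 ∂μ :=
    i2ind.integral_fun_mul_eq_mul_integral (hmB.pow_const 2).aestronglyMeasurable
      (hmC.abs.pow_const 3).aestronglyMeasurable
  have eg3 : ∫ ω, |B ω| * |C ω| ^ 4 ∂μ = (∫ ω, |B ω| ∂μ) * ∫ ω, |C ω| ^ 4 ∂μ :=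
    i3ind.integral_fun_mul_eq_mul_integral hmB.abs.aestronglyMeasurable
      (hmC.abs.pow_const 4).aestronglyMeasurable
  have eg : ∫ ω, g ω ∂μ
      = 2 * ((∫ ω, |B ω| ^ 3 ∂μ) * ∫ ω, C ω ^ 2 ∂μ)
        + (3 * ((∫ ω, B ω ^ 2 ∂μ) * ∫ ω, |C ω| ^ 3 ∂μ)
          + (2 * ((∫ ω, |B ω| ∂μ) * ∫ ω, |C ω| ^ 4 ∂μ) + (∫ ω, |C ω| ^ 5 ∂μ) / 2)) := by
    have e : g = fun ω => 2 * (|B ω| ^ 3 * C ω ^ 2) + (3 * (B ω ^ 2 * |C ω| ^ 3)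
        + (2 * (|B ω| * |C ω| ^ 4) + |C ω| ^ 5 / 2)) := by
      funext ω; simp only [hg]; ring
    have j3 : Integrable (fun ω => 2 * (|B ω| * |C ω| ^ 4) + |C ω| ^ 5 / 2) μ :=
      (i3.const_mul 2).add (hI7.div_const 2)
    have j2 : Integrable (fun ω => 3 * (B ω ^ 2 * |C ω| ^ 3)
        + (2 * (|B ω| * |C ω| ^ 4) + |C ω| ^ 5 / 2)) μ := (i2.const_mul 3).add j3
    rw [e, integral_add (i1.const_mul 2) j2,
      integral_add (i2.const_mul 3) j3,
      integral_add (i3.const_mul 2) (hI7.div_const 2),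
      integral_const_mul, integral_const_mul, integral_const_mul, integral_div,
      eg1, eg2, eg3]
  -- moment inequality : 2 E|B| E|C|⁴ ≤ 2 E B² E|C|³ + E|C|⁵ / 2
  obtain ⟨m, hm0⟩ : ∃ m : ℝ, m = ∫ ω, |B ω| ∂μ := ⟨_, rfl⟩
  rw [← hm0] at eg
  have hm2 : m ^ 2 ≤ ∫ ω, B ω ^ 2 ∂μ := by
    have h0 : 0 ≤ ∫ ω, (|B ω| - m) ^ 2 ∂μ := integral_nonneg fun ω => sq_nonneg _
    have he : ∫ ω, (|B ω| - m) ^ 2 ∂μ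
        = ∫ ω, (B ω ^ 2 - (2 * m) * |B ω| + m ^ 2) ∂μ := by
      refine integral_congr_ae (Filter.Eventually.of_forall fun ω => ?_)
      simp only [sub_sq, sq_abs]; ring
    have jsub : Integrable (fun ω => B ω ^ 2 - (2 * m) * |B ω|) μ :=
      hI5.sub (intB.abs.const_mul (2 * m))
    have jabs : Integrable (fun ω => (2 * m) * |B ω|) μ := intB.abs.const_mul (2 * m)
    rw [he, integral_add jsub (integrable_const _),
      integral_sub hI5 jabs, integral_const_mul,
      integral_const] at h0
    simp only [measure_univ, probReal_univ, ENNReal.toReal_one, smul_eq_mul, one_mul] at h0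
    rw [← hm0] at h0
    have hmm : m * m = m ^ 2 := by ring
    linarith [h0, hmm]
  have hptc : ∀ ω, (2 * m) * |C ω| ^ 4 ≤ (2 * m ^ 2) * |C ω| ^ 3 + |C ω| ^ 5 / 2 := by
    intro ω
    nlinarith [mul_nonneg (pow_nonneg (abs_nonneg (C ω)) 3) (sq_nonneg (m - |C ω| / 2))]
  have hint4 : 2 * m * ∫ ω, |C ω| ^ 4 ∂μ
      ≤ 2 * m ^ 2 * (∫ ω, |C ω| ^ 3 ∂μ) + (∫ ω, |C ω| ^ 5 ∂μ) / 2 := by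
    have jadd : Integrable (fun ω => 2 * m ^ 2 * |C ω| ^ 3 + |C ω| ^ 5 / 2) μ :=
      (hI6.const_mul (2 * m ^ 2)).add (hI7.div_const 2)
    have := integral_mono (intC4.const_mul (2 * m)) jadd hptc
    rwa [integral_const_mul, integral_add (hI6.const_mul (2 * m ^ 2)) (hI7.div_const 2),
      integral_const_mul, integral_div] at this
  -- nonnegativity of various integrals
  have p3 : 0 ≤ ∫ ω, |C ω| ^ 3 ∂μ := integral_nonneg fun ω => by positivity
  have q2 : (∫ ω, (B ω) ^ 2 ∂μ) ≥ m ^ 2 := hm2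
  have hC3nn : 2 * m ^ 2 * (∫ ω, |C ω| ^ 3 ∂μ) ≤ 2 * (∫ ω, B ω ^ 2 ∂μ) * ∫ ω, |C ω| ^ 3 ∂μ := by
    have := mul_le_mul_of_nonneg_right hm2 p3
    nlinarith [this]
  have hgle : ∫ ω, g ω ∂μ
      ≤ 2 * (∫ ω, |B ω| ^ 3 ∂μ) * (∫ ω, (C ω) ^ 2 ∂μ)
        + 5 * (∫ ω, (B ω) ^ 2 ∂μ) * (∫ ω, |C ω| ^ 3 ∂μ) + ∫ ω, |C ω| ^ 5 ∂μ := by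
    rw [eg]
    linarith [hint4, hC3nn]
  have h''nn : 0 ≤ ∫ ω, hAdam'' ε (A ω) ∂μ :=
    integral_nonneg_of_ae (hApos.mono fun ω h => hAdam''_nonneg hε h)
  calc |∫ ω, D ω * C ω ∂μ| ≤ ∫ ω, hAdam'' ε (A ω) * g ω ∂μ := hbound
    _ = (∫ ω, hAdam'' ε (A ω) ∂μ) * ∫ ω, g ω ∂μ := eK
    _ ≤ (∫ ω, hAdam'' ε (A ω) ∂μ)
          * (2 * (∫ ω, |B ω| ^ 3 ∂μ) * (∫ ω, (C ω) ^ 2 ∂μ)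
            + 5 * (∫ ω, (B ω) ^ 2 ∂μ) * (∫ ω, |C ω| ^ 3 ∂μ)
            + ∫ ω, |C ω| ^ 5 ∂μ) := mul_le_mul_of_nonneg_left hgle h''nn
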